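/- arXiv:1302.0636 — 4 statements merged into one kernel-verified Lean document; each statement's English description precedes it below -/
import Mathlib

section
/- Let G be a countable group and (E_n)_{n∈ℕ} an increasing exhausting sequence of finite nonempty subsets of G such that E_m · E_n ⊆ E_{m+n} for all m, n, and |E_{n+1}|/|E_n| → 1 as n → ∞. Then (E_n) is a Følner sequence: for every γ ∈ G, |γE_n △ E_n|/|E_n| → 0. -/
open Filter Topology

/-- d'Alembert criterion. An increasing exhausting sequence of finite
nonempty subsets with `E_m · E_n ⊆ E_{m+n}` and `|E_{n+1}|/|E_n| → 1` is Følner. -/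
theorem stmt3 {G : Type*} [Group G] [Countable G] [DecidableEq G]
    (E : ℕ → Finset G) (hne : ∀ n, (E n).Nonempty)
    (hmono : Monotone E) (hexh : ∀ γ : G, ∃ n, γ ∈ E n)
    (hmul : ∀ m n, ∀ a ∈ E m, ∀ b ∈ E n, a * b ∈ E (m + n))
    (hratio : Tendsto (fun n => ((E (n + 1)).card : ℝ) / (E n).card) atTop (𝓝 1)) :
    ∀ γ : G, Tendsto
      (fun n => ((symmDiff ((E n).image (γ * ·)) (E n)).card : ℝ) / (E n).card)
      atTop (𝓝 0) := by
  have hpos : ∀ n, (0:ℝ) < (E n).card := fun n => by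
    exact_mod_cast Finset.card_pos.mpr (hne n)
  -- ratio going down one step tends to 1
  have hinv : Tendsto (fun n => ((E n).card : ℝ) / (E (n + 1)).card) atTop (𝓝 1) := by
    have := hratio.inv₀ one_ne_zero
    simpa [inv_div] using this
  -- forward ratio over k steps tends to 1
  have hF : ∀ k : ℕ, Tendsto (fun n => ((E n).card : ℝ) / (E (n + k)).card) atTop (𝓝 1) := by
    intro k
    induction k with
    | zero => simpa [div_self (hpos _).ne'] using tendsto_const_nhds (α := ℝ) (x := 1)
    | succ k ih =>
      have h2 : Tendsto (fun n => ((E (n + k)).card : ℝ) / (E (n + k + 1)).card)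
          atTop (𝓝 1) := hinv.comp (tendsto_add_atTop_nat k)
      have := ih.mul h2
      rw [mul_one] at this
      refine this.congr fun n => ?_
      rw [div_mul_div_comm, div_eq_div_iff (by positivity) (by positivity)]
      ring
  intro γ
  obtain ⟨k, hk⟩ := hexh γ
  -- g n = |E (n-k)| / |E n| → 1
  have hg : Tendsto (fun n => ((E (n - k)).card : ℝ) / (E n).card) atTop (𝓝 1) := by
    have h1 : Tendsto (fun n => ((E (n - k)).card : ℝ) / (E (n - k + k)).card)
        atTop (𝓝 1) := (hF k).comp (tendsto_sub_atTop_nat k)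
    refine h1.congr' ?_
    filter_upwards [eventually_ge_atTop k] with n hn
    rw [Nat.sub_add_cancel hn]
  -- squeeze
  have hub : Tendsto (fun n => 2 * (1 - ((E (n - k)).card : ℝ) / (E n).card))
      atTop (𝓝 0) := by
    have := (tendsto_const_nhds (x := (2:ℝ)) (α := ℕ)).mul
      ((tendsto_const_nhds (x := (1:ℝ)) (α := ℕ)).sub hg)
    simpa using this
  refine tendsto_of_tendsto_of_tendsto_of_le_of_le' tendsto_const_nhds hub ?_ ?_
  · filter_upwards with n
    positivity
  · filter_upwards [eventually_ge_atTop k] with n hn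
    set A := (E n).image (γ * ·) with hA
    have hinj : Function.Injective (γ * ·) := fun a b h => by
      simpa using h
    have hcardA : A.card = (E n).card := Finset.card_image_of_injective _ hinj
    -- the translate of E (n-k) sits in A ∩ E n
    have hsub : (E (n - k)).image (γ * ·) ⊆ A ∩ E n := by
      intro x hx
      obtain ⟨b, hb, rfl⟩ := Finset.mem_image.mp hx
      refine Finset.mem_inter.mpr ⟨?_, ?_⟩
      · exact Finset.mem_image.mpr ⟨b, hmono (Nat.sub_le n k) hb, rfl⟩
      · have := hmul k (n - k) γ hk b hb
        rwa [Nat.add_sub_cancel' hn] at this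
    have hAB : (E (n - k)).card ≤ (A ∩ E n).card := by
      calc (E (n - k)).card = ((E (n - k)).image (γ * ·)).card :=
            (Finset.card_image_of_injective _ hinj).symm
        _ ≤ (A ∩ E n).card := Finset.card_le_card hsub
    have hABle : (A ∩ E n).card ≤ (E n).card := by
      exact le_trans (Finset.card_le_card Finset.inter_subset_right) le_rfl
    have hsd : (symmDiff A (E n)).card ≤ 2 * ((E n).card - (E (n - k)).card) := by
      have h1 : (A \ E n).card + (A ∩ E n).card = A.card := Finset.card_sdiff_add_card_inter A (E n)
      have h2 : (E n \ A).card + (E n ∩ A).card = (E n).card := Finset.card_sdiff_add_card_inter (E n) A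
      have hdisj : Disjoint (A \ E n) (E n \ A) := disjoint_sdiff_sdiff
      have hcard : (symmDiff A (E n)).card = (A \ E n).card + (E n \ A).card := by
        rw [symmDiff_def]
        exact Finset.card_union_of_disjoint hdisj
      rw [Finset.inter_comm] at h2
      omega
    have hcast : ((symmDiff A (E n)).card : ℝ) ≤ 2 * ((E n).card - (E (n - k)).card) := by
      have hle : (E (n - k)).card ≤ (E n).card :=
        Finset.card_le_card (hmono (Nat.sub_le n k))
      calc ((symmDiff A (E n)).card : ℝ) ≤ ((2 * ((E n).card - (E (n - k)).card) : ℕ) : ℝ) := by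
            exact_mod_cast hsd
        _ = 2 * ((E n).card - (E (n - k)).card) := by
            push_cast [Nat.cast_sub hle]; ring
    rw [div_le_iff₀ (hpos n)]
    have : 2 * (1 - ((E (n - k)).card : ℝ) / (E n).card) * (E n).card
        = 2 * (((E n).card : ℝ) - (E (n - k)).card) := by
      field_simp
    rw [this]
    exact hcast
end

section
/- Let G be a countable group and (E_n) an increasing exhausting sequence of finite subsets with |E_n| ≥ 1, satisfying E_m·E_n ⊆ E_{m+n} and |E_n|^{1/n} → 1 as n → ∞. Then for every k ≥ 1 and ε > 0 there exists n ≥ k such that for all γ ∈ E_k, |γE_n △ E_n|/|E_n| ≤ ε. In particular (passing to a subsequence adapted to an exhaustion) G is amenable. -/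
open Filter Topology

/-- subexponential growth criterion. If `(E_n)` is increasing exhausting,
`E_m·E_n ⊆ E_{m+n}` and `|E_n|^{1/n} → 1`, then for every `k ≥ 1` and `ε > 0` there is
`n ≥ k` with `|γE_n △ E_n|/|E_n| ≤ ε` for all `γ ∈ E_k`; in particular `G` is amenable
(has a Følner sequence). -/
theorem stmt5 {G : Type*} [Group G] [Countable G] [DecidableEq G]
    (E : ℕ → Finset G) (hne : ∀ n, 1 ≤ (E n).card)
    (hmono : Monotone E) (hexh : ∀ γ : G, ∃ n, γ ∈ E n)
    (hmul : ∀ m n, ∀ a ∈ E m, ∀ b ∈ E n, a * b ∈ E (m + n))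
    (hgrowth : Tendsto (fun n => ((E n).card : ℝ) ^ (1 / (n : ℝ))) atTop (𝓝 1)) :
    (∀ k ≥ 1, ∀ ε > 0, ∃ n ≥ k, ∀ γ ∈ E k,
      ((symmDiff ((E n).image (γ * ·)) (E n)).card : ℝ) / (E n).card ≤ ε) ∧
    (∃ F : ℕ → Finset G, (∀ n, (F n).Nonempty) ∧
      ∀ γ : G, Tendsto
        (fun n => ((symmDiff ((F n).image (γ * ·)) (F n)).card : ℝ) / (F n).card)
        atTop (𝓝 0)) := by
  have key : ∀ k ≥ 1, ∀ ε > 0, ∃ n ≥ k, ∀ γ ∈ E k,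
      ((symmDiff ((E n).image (γ * ·)) (E n)).card : ℝ) / (E n).card ≤ ε := by
    intro k hk ε hε
    set ρ : ℝ := 1 + ε / 2 with hρdef
    have hρ : 1 < ρ := by rw [hρdef]; linarith
    have hρ0 : (0 : ℝ) < ρ := by linarith
    -- Step 1: find j with a small growth increment
    have hstep : ∃ j : ℕ, ((E (k * (j + 1) + k)).card : ℝ) ≤ ρ * (E (k * (j + 1))).card := by
      by_contra hcon
      push_neg at hcon
      have hgrow : ∀ N : ℕ, ρ ^ N ≤ ((E (k * (N + 1))).card : ℝ) := by
        intro N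
        induction N with
        | zero =>
          simpa using (by exact_mod_cast hne (k * 1) : (1 : ℝ) ≤ (E (k * 1)).card)
        | succ N ih =>
          have h1 := hcon N
          have h2 : k * (N + 1) + k = k * (N + 1 + 1) := by ring
          rw [h2] at h1
          calc ρ ^ (N + 1) = ρ * ρ ^ N := by ring
            _ ≤ ρ * (E (k * (N + 1))).card := by
                exact mul_le_mul_of_nonneg_left ih hρ0.le
            _ ≤ ((E (k * (N + 1 + 1))).card : ℝ) := h1.le
      -- subsequence of hgrowth
      have hsub : Tendsto (fun N : ℕ => ((E (k * (N + 1))).card : ℝ) ^ (1 / ((k * (N + 1) : ℕ) : ℝ)))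
          atTop (𝓝 1) := by
        apply hgrowth.comp
        apply tendsto_atTop_mono (fun N => ?_) tendsto_id
        calc (id N : ℕ) = N := rfl
          _ ≤ N + 1 := Nat.le_succ N
          _ ≤ k * (N + 1) := Nat.le_mul_of_pos_left _ hk
      -- lower bound sequence
      have hlow : ∀ N : ℕ, ρ ^ (((N : ℝ) / (N + 1)) * (1 / k)) ≤
          ((E (k * (N + 1))).card : ℝ) ^ (1 / ((k * (N + 1) : ℕ) : ℝ)) := by
        intro N
        have hkpos : (0 : ℝ) < k := by exact_mod_cast hk
        have hd : (0 : ℝ) < ((k * (N + 1) : ℕ) : ℝ) := by positivity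
        have hN1 : ((N : ℝ) + 1) ≠ 0 := by positivity
        have hk0 : (k : ℝ) ≠ 0 := ne_of_gt hkpos
        have he : ((N : ℝ) / (N + 1)) * (1 / k) = (N : ℝ) * (1 / ((k * (N + 1) : ℕ) : ℝ)) := by
          have h1 : ((k * (N + 1) : ℕ) : ℝ) = (k : ℝ) * ((N : ℝ) + 1) := by push_cast; ring
          rw [h1]
          field_simp
        rw [he]
        calc ρ ^ ((N : ℝ) * (1 / ((k * (N + 1) : ℕ) : ℝ)))
            = (ρ ^ (N : ℝ)) ^ (1 / ((k * (N + 1) : ℕ) : ℝ)) := by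
              rw [← Real.rpow_mul hρ0.le]
          _ = (ρ ^ N) ^ (1 / ((k * (N + 1) : ℕ) : ℝ)) := by rw [Real.rpow_natCast]
          _ ≤ ((E (k * (N + 1))).card : ℝ) ^ (1 / ((k * (N + 1) : ℕ) : ℝ)) := by
              apply Real.rpow_le_rpow (by positivity) (hgrow N) (by positivity)
      -- limit of the lower bound
      have hexp : Tendsto (fun N : ℕ => ((N : ℝ) / (N + 1)) * (1 / k)) atTop (𝓝 (1 / k)) := by
        have := (tendsto_natCast_div_add_atTop (1 : ℝ)).mul_const (1 / (k : ℝ))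
        simpa using this
      have hlowlim : Tendsto (fun N : ℕ => ρ ^ (((N : ℝ) / (N + 1)) * (1 / k)))
          atTop (𝓝 (ρ ^ (1 / (k : ℝ)))) :=
        ((Real.continuousAt_const_rpow (ne_of_gt hρ0)).tendsto.comp hexp)
      have hle : ρ ^ (1 / (k : ℝ)) ≤ 1 := le_of_tendsto_of_tendsto' hlowlim hsub hlow
      have : 1 < ρ ^ (1 / (k : ℝ)) := by
        rw [Real.one_lt_rpow_iff_of_pos hρ0]
        left
        constructor
        · exact hρ
        · have : (0:ℝ) < k := by exact_mod_cast hk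
          positivity
      linarith
    obtain ⟨j, hj⟩ := hstep
    refine ⟨k * (j + 1), Nat.le_mul_of_pos_right k (Nat.succ_pos j), ?_⟩
    intro γ hγ
    set n := k * (j + 1) with hn
    set s := (E n).image (γ * ·) with hs
    have hscard : s.card = (E n).card := Finset.card_image_of_injective _ (mul_right_injective γ)
    have hsub1 : s ⊆ E (n + k) := by
      intro a ha
      rw [hs, Finset.mem_image] at ha
      obtain ⟨b, hb, rfl⟩ := ha
      have := hmul k n γ hγ b hb
      rwa [add_comm] at this
    have hsub2 : E n ⊆ E (n + k) := hmono (Nat.le_add_right n k)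
    have hu1 : (s \ E n).card + (E n).card ≤ (E (n + k)).card := by
      rw [Finset.card_sdiff_add_card]
      exact Finset.card_le_card (Finset.union_subset hsub1 hsub2)
    have hu2 : (E n \ s).card + (E n).card ≤ (E (n + k)).card := by
      rw [← hscard, Finset.card_sdiff_add_card]
      exact Finset.card_le_card (Finset.union_subset hsub2 hsub1)
    have hsy : (symmDiff s (E n)).card = (s \ E n).card + (E n \ s).card := by
      rw [symmDiff_def, Finset.sup_eq_union]
      exact Finset.card_union_of_disjoint disjoint_sdiff_sdiff
    have hcards : ((E (n + k)).card : ℝ) ≤ ρ * (E n).card := by exact_mod_cast hj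
    have hpos : (0 : ℝ) < (E n).card := by exact_mod_cast hne n
    rw [div_le_iff₀ hpos]
    have h1 : ((s \ E n).card : ℝ) + (E n).card ≤ (E (n + k)).card := by exact_mod_cast hu1
    have h2 : ((E n \ s).card : ℝ) + (E n).card ≤ (E (n + k)).card := by exact_mod_cast hu2
    have h3 : ((symmDiff s (E n)).card : ℝ) = (s \ E n).card + (E n \ s).card := by
      exact_mod_cast hsy
    rw [h3]
    have h4 : ρ * (E n).card - (E n).card = (ε / 2) * (E n).card := by rw [hρdef]; ring
    rw [hρdef] at hcards
    nlinarith [hε, hpos]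
  refine ⟨key, ?_⟩
  choose nf hnf hF using fun j : ℕ =>
    key (j + 1) (Nat.le_add_left 1 j) (1 / (j + 1 : ℝ)) (by positivity)
  refine ⟨fun j => E (nf j), fun j => Finset.card_pos.mp (hne (nf j)), ?_⟩
  intro γ
  obtain ⟨m, hm⟩ := hexh γ
  apply squeeze_zero' (g := fun j : ℕ => 1 / (j + 1 : ℝ))
  · exact Eventually.of_forall fun j => by positivity
  · filter_upwards [eventually_ge_atTop m] with j hj
    exact hF j γ (hmono (hj.trans (Nat.le_succ j)) hm)
  · exact tendsto_one_div_add_atTop_nhds_zero_nat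
end

section
/- Let G be a countable group with a proper length function l : G → ℝ≥0 (l(e) = 0, l(γ⁻¹) = l(γ), l(γ₁γ₂) ≤ l(γ₁) + l(γ₂), and each ball B(n) = {γ : l(γ) ≤ n} is finite and nonempty). Then B(m)·B(n) ⊆ B(m+n). If moreover |B(n+1)|/|B(n)| → 1, then (B(n)) is a Følner sequence and G is amenable. -/
open Pointwise Filter Topology

/-- for a proper length function, `B(m)·B(n) ⊆ B(m+n)`; if moreover
`|B(n+1)|/|B(n)| → 1` then `(B(n))` is a Følner sequence (so `G` is amenable). -/
theorem stmt11 {G : Type*} [Group G] [Countable G]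
    (l : G → ℝ) (hl1 : l 1 = 0) (hlnn : ∀ γ, 0 ≤ l γ)
    (hinv : ∀ γ, l γ⁻¹ = l γ)
    (hsub : ∀ γ₁ γ₂, l (γ₁ * γ₂) ≤ l γ₁ + l γ₂)
    (B : ℕ → Set G) (hB : ∀ n, B n = {γ | l γ ≤ n})
    (hfin : ∀ n, (B n).Finite) (hne : ∀ n, (B n).Nonempty) :
    (∀ m n, B m * B n ⊆ B (m + n)) ∧
    ((Tendsto (fun n => ((B (n + 1)).ncard : ℝ) / (B n).ncard) atTop (𝓝 1)) →
      ∀ γ : G, Tendsto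
        (fun n => ((symmDiff (γ • B n) (B n)).ncard : ℝ) / (B n).ncard)
        atTop (𝓝 0)) := by
  have hmem : ∀ (n : ℕ) (x : G), x ∈ B n ↔ l x ≤ n := by
    intro n x; rw [hB]; rfl
  have hmono : ∀ {m n : ℕ}, m ≤ n → B m ⊆ B n := by
    intro m n hmn x hx
    rw [hmem] at hx ⊢
    exact hx.trans (by exact_mod_cast hmn)
  have part1 : ∀ m n, B m * B n ⊆ B (m + n) := by
    intro m n x hx
    obtain ⟨a, ha, b, hb, rfl⟩ := hx
    rw [hmem] at ha hb ⊢
    push_cast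
    exact (hsub a b).trans (add_le_add ha hb)
  refine ⟨part1, ?_⟩
  intro hlim γ
  set k : ℕ := ⌈l γ⌉₊ with hk
  have hγk : l γ ≤ (k : ℝ) := Nat.le_ceil _
  have hγB : ∀ n, γ • B n ⊆ B (n + k) := by
    intro n x hx
    obtain ⟨y, hy, rfl⟩ := hx
    rw [hmem] at hy ⊢
    push_cast
    calc l (γ * y) ≤ l γ + l y := hsub _ _
      _ ≤ (k : ℝ) + n := add_le_add hγk hy
      _ = (n : ℝ) + k := add_comm _ _
  have hγB' : ∀ n, B n \ γ • B n ⊆ γ • (B (n + k) \ B n) := by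
    intro n x hx
    refine ⟨γ⁻¹ * x, ⟨?_, ?_⟩, by simp⟩
    · rw [hmem]
      push_cast
      calc l (γ⁻¹ * x) ≤ l γ⁻¹ + l x := hsub _ _
        _ = l γ + l x := by rw [hinv]
        _ ≤ (k : ℝ) + n := add_le_add hγk ((hmem n x).1 hx.1)
        _ = (n : ℝ) + k := add_comm _ _
    · intro hmemx
      exact hx.2 ⟨γ⁻¹ * x, hmemx, by simp⟩
  have hpos : ∀ n, 0 < ((B n).ncard : ℝ) := by
    intro n
    exact_mod_cast (Set.ncard_pos (hfin n)).2 (hne n)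
  have hle : ∀ n, (B n).ncard ≤ (B (n + k)).ncard := fun n =>
    Set.ncard_le_ncard (hmono (Nat.le_add_right n k)) (hfin (n + k))
  -- cardinality bound on the symmetric difference
  have hbound : ∀ n, ((symmDiff (γ • B n) (B n)).ncard : ℝ) ≤
      2 * (((B (n + k)).ncard : ℝ) - (B n).ncard) := by
    intro n
    have hfd : (B (n + k) \ B n).Finite := (hfin (n + k)).diff
    have h1 : (γ • B n \ B n).ncard ≤ (B (n + k) \ B n).ncard :=
      Set.ncard_le_ncard (Set.diff_subset_diff_left (hγB n)) hfd
    have h2 : (B n \ γ • B n).ncard ≤ (B (n + k) \ B n).ncard := by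
      calc (B n \ γ • B n).ncard ≤ (γ • (B (n + k) \ B n)).ncard :=
            Set.ncard_le_ncard (hγB' n) (hfd.image _)
        _ = (B (n + k) \ B n).ncard := Set.ncard_smul_set γ _
    have hdiff : (B (n + k) \ B n).ncard = (B (n + k)).ncard - (B n).ncard :=
      Set.ncard_diff (hmono (Nat.le_add_right n k)) (hfin n)
    have hcast : ((B (n + k) \ B n).ncard : ℝ) =
        ((B (n + k)).ncard : ℝ) - (B n).ncard := by
      rw [hdiff, Nat.cast_sub (hle n)]
    have hsd : (symmDiff (γ • B n) (B n)).ncard ≤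
        (γ • B n \ B n).ncard + (B n \ γ • B n).ncard := by
      rw [symmDiff_def]
      exact Set.ncard_union_le _ _
    calc ((symmDiff (γ • B n) (B n)).ncard : ℝ)
        ≤ ((γ • B n \ B n).ncard : ℝ) + (B n \ γ • B n).ncard := by
          exact_mod_cast hsd
      _ ≤ ((B (n + k) \ B n).ncard : ℝ) + (B (n + k) \ B n).ncard := by
          exact_mod_cast add_le_add h1 h2
      _ = 2 * (((B (n + k)).ncard : ℝ) - (B n).ncard) := by rw [hcast]; ring
  -- the ratio |B(n+j)|/|B(n)| tends to 1 for every fixed j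
  have hratio : ∀ j : ℕ, Tendsto
      (fun n => ((B (n + j)).ncard : ℝ) / (B n).ncard) atTop (𝓝 1) := by
    intro j
    induction j with
    | zero =>
      have : (fun n => ((B (n + 0)).ncard : ℝ) / (B n).ncard) = fun _ => (1 : ℝ) := by
        funext n; simp [div_self (hpos n).ne']
      rw [this]; exact tendsto_const_nhds
    | succ j ih =>
      have h1 : Tendsto (fun n => ((B (n + j + 1)).ncard : ℝ) / (B (n + j)).ncard)
          atTop (𝓝 1) := hlim.comp (tendsto_add_atTop_nat j)
      have h2 := h1.mul ih
      rw [mul_one] at h2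
      have heq : (fun n => ((B (n + (j + 1))).ncard : ℝ) / (B n).ncard) =
          fun n => (((B (n + j + 1)).ncard : ℝ) / (B (n + j)).ncard) *
            (((B (n + j)).ncard : ℝ) / (B n).ncard) := by
        funext n
        rw [show n + (j + 1) = n + j + 1 from rfl,
          div_mul_div_cancel₀ (hpos (n + j)).ne']
      rw [heq]; exact h2
  -- squeeze
  have h2 : Tendsto (fun n => 2 * (((B (n + k)).ncard : ℝ) / (B n).ncard - 1))
      atTop (𝓝 0) := by
    have := ((hratio k).sub_const 1).const_mul 2
    simpa using this
  refine squeeze_zero (fun n => div_nonneg (Nat.cast_nonneg _) (Nat.cast_nonneg _))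
    (fun n => ?_) h2
  calc ((symmDiff (γ • B n) (B n)).ncard : ℝ) / (B n).ncard
        ≤ 2 * (((B (n + k)).ncard : ℝ) - (B n).ncard) / (B n).ncard := by
          gcongr
          exact hbound n
      _ = 2 * (((B (n + k)).ncard : ℝ) / (B n).ncard - 1) := by
          rw [mul_div_assoc, sub_div, div_self (hpos n).ne']
end

section
/- Let G be a countable group with a length function l, and suppose the balls B(n) are finite nonempty with subexponential growth: |B(n)|^{1/n} → 1. Then G is amenable (there exists a Følner sequence extracted from the balls). -/
open Pointwise Filter Topology

/-- Key growth lemma: if `f n ≥ 1` and `f n ^ (1/n) → 1`, then for every `k > 0`,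
`ε > 0` and `N` there is `m ≥ N` with `f (m + k) ≤ (1+ε) * f m`. -/
lemma stmt12_aux (f : ℕ → ℝ) (hf1 : ∀ n, 1 ≤ f n)
    (hg : Tendsto (fun n => f n ^ (1 / (n : ℝ))) atTop (𝓝 1))
    (k : ℕ) (hk : 0 < k) (ε : ℝ) (hε : 0 < ε) (N : ℕ) :
    ∃ m, N ≤ m ∧ f (m + k) ≤ (1 + ε) * f m := by
  by_contra h
  push_neg at h
  have key : ∀ j : ℕ, (1 + ε) ^ j ≤ f (N + j * k) := by
    intro j
    induction j with
    | zero => simpa using hf1 N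
    | succ j ih =>
      have h2 := h (N + j * k) (Nat.le_add_right _ _)
      have hpow : (0 : ℝ) ≤ (1 + ε) ^ j := by positivity
      calc (1 + ε) ^ (j + 1) = (1 + ε) * (1 + ε) ^ j := by ring
        _ ≤ (1 + ε) * f (N + j * k) := by nlinarith
        _ ≤ f (N + j * k + k) := le_of_lt h2
        _ = f (N + (j + 1) * k) := by rw [show N + (j+1)*k = N + j*k + k by ring]
  have hsub_at : Tendsto (fun j : ℕ => N + j * k) atTop atTop := by
    apply tendsto_atTop_mono (fun j => ?_) tendsto_id
    calc (id j : ℕ) = j := rfl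
      _ ≤ j * k := Nat.le_mul_of_pos_right j hk
      _ ≤ N + j * k := Nat.le_add_left _ _
  have hup : Tendsto (fun j : ℕ => f (N + j * k) ^ (1 / ((N + j * k : ℕ) : ℝ)))
      atTop (𝓝 1) := hg.comp hsub_at
  -- exponent limit
  have hkR : (0 : ℝ) < (k : ℝ) := by exact_mod_cast hk
  have hE0 : Tendsto (fun j : ℕ => (N : ℝ) / (j : ℝ) + (k : ℝ)) atTop (𝓝 (0 + k)) :=
    (tendsto_const_div_atTop_nhds_zero_nat (N : ℝ)).add tendsto_const_nhds
  have hE1 : Tendsto (fun j : ℕ => 1 / ((N : ℝ) / (j : ℝ) + (k : ℝ))) atTop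
      (𝓝 (1 / (0 + k))) := tendsto_const_nhds.div hE0 (by positivity)
  have hE : Tendsto (fun j : ℕ => (j : ℝ) / (((N + j * k : ℕ)) : ℝ)) atTop
      (𝓝 (1 / (k : ℝ))) := by
    rw [show (1 : ℝ) / (k : ℝ) = 1 / (0 + k) by rw [zero_add]]
    apply hE1.congr'
    filter_upwards [eventually_ge_atTop 1] with j hj
    have hjR : (0 : ℝ) < (j : ℝ) := by exact_mod_cast hj
    have hden : (N : ℝ) / (j : ℝ) + (k : ℝ) = ((N : ℝ) + (j : ℝ) * k) / j := by
      field_simp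
    rw [hden, one_div_div]
    push_cast
    ring
  have hlow : Tendsto (fun j : ℕ => (1 + ε) ^ ((j : ℝ) / (((N + j * k : ℕ)) : ℝ)))
      atTop (𝓝 ((1 + ε) ^ (1 / (k : ℝ)))) :=
    Tendsto.rpow tendsto_const_nhds hE (Or.inl (by positivity))
  have hle : (1 + ε) ^ (1 / (k : ℝ)) ≤ 1 := by
    refine le_of_tendsto_of_tendsto' hlow hup (fun j => ?_)
    have h1 : (((1 + ε) ^ j : ℝ)) ^ (1 / ((N + j * k : ℕ) : ℝ))
        ≤ f (N + j * k) ^ (1 / ((N + j * k : ℕ) : ℝ)) :=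
      Real.rpow_le_rpow (by positivity) (key j) (by positivity)
    calc (1 + ε) ^ ((j : ℝ) / (((N + j * k : ℕ)) : ℝ))
        = (1 + ε) ^ ((j : ℝ) * (1 / (((N + j * k : ℕ)) : ℝ))) := by
          rw [mul_one_div]
      _ = (((1 + ε) ^ (j : ℝ) : ℝ)) ^ (1 / ((N + j * k : ℕ) : ℝ)) := by
          rw [Real.rpow_mul (by positivity)]
      _ = (((1 + ε) ^ j : ℝ)) ^ (1 / ((N + j * k : ℕ) : ℝ)) := by
          rw [Real.rpow_natCast]
      _ ≤ f (N + j * k) ^ (1 / ((N + j * k : ℕ) : ℝ)) := h1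
  have hgt : 1 < (1 + ε) ^ (1 / (k : ℝ)) := by
    rw [Real.one_lt_rpow_iff_of_pos (by linarith)]
    exact Or.inl ⟨by linarith, by positivity⟩
  linarith

/-- a countable group with a length function whose balls are finite,
nonempty and of subexponential growth (`|B(n)|^{1/n} → 1`) is amenable: it admits a
Følner sequence (extracted from the balls). -/
theorem stmt12 {G : Type*} [Group G] [Countable G] [DecidableEq G]
    (l : G → ℝ) (hl1 : l 1 = 0) (hlnn : ∀ γ, 0 ≤ l γ)
    (hinv : ∀ γ, l γ⁻¹ = l γ)
    (hsub : ∀ γ₁ γ₂, l (γ₁ * γ₂) ≤ l γ₁ + l γ₂)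
    (B : ℕ → Set G) (hB : ∀ n, B n = {γ | l γ ≤ n})
    (hfin : ∀ n, (B n).Finite) (hne : ∀ n, (B n).Nonempty)
    (hgrowth : Tendsto (fun n => ((B n).ncard : ℝ) ^ (1 / (n : ℝ))) atTop (𝓝 1)) :
    ∃ F : ℕ → Finset G, (∀ n, (F n).Nonempty) ∧
      ∀ γ : G, Tendsto
        (fun n => ((symmDiff ((F n).image (γ * ·)) (F n)).card : ℝ) / (F n).card)
        atTop (𝓝 0) := by
  classical
  -- the cardinality function
  set f : ℕ → ℝ := fun n => ((B n).ncard : ℝ) with hf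
  have hf1 : ∀ n, 1 ≤ f n := by
    intro n
    have : 0 < (B n).ncard := (Set.ncard_pos (hfin n)).mpr (hne n)
    simp only [hf]
    exact_mod_cast this
  -- enumeration of G
  obtain ⟨e, he⟩ := exists_surjective_nat G
  -- length bounds
  set k : ℕ → ℕ := fun n => ((Finset.range (n + 1)).sup fun i => ⌈l (e i)⌉₊) + 1 with hkdef
  have hkpos : ∀ n, 0 < k n := fun n => Nat.succ_pos _
  -- choose good indices
  have hchoice : ∀ n : ℕ, ∃ m, n ≤ m ∧ f (m + k n) ≤ (1 + 1 / ((n : ℝ) + 1)) * f m := by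
    intro n
    exact stmt12_aux f hf1 hgrowth (k n) (hkpos n) (1 / ((n : ℝ) + 1)) (by positivity) n
  choose m hm1 hm2 using hchoice
  refine ⟨fun n => (hfin (m n)).toFinset, fun n => ?_, fun γ => ?_⟩
  · simpa using hne (m n)
  · obtain ⟨i, rfl⟩ := he γ
    -- bound for n ≥ i
    have hbound : ∀ n, i ≤ n →
        ((symmDiff (((hfin (m n)).toFinset).image (e i * ·)) ((hfin (m n)).toFinset)).card : ℝ)
          / ((hfin (m n)).toFinset).card ≤ 2 / ((n : ℝ) + 1) := by
      intro n hin
      set F := (hfin (m n)).toFinset with hFdef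
      set C := (hfin (m n + k n)).toFinset with hCdef
      set S := F.image (e i * ·) with hSdef
      have hlk : l (e i) ≤ (k n : ℝ) := by
        have h1 : l (e i) ≤ (⌈l (e i)⌉₊ : ℝ) := Nat.le_ceil _
        have h2 : ⌈l (e i)⌉₊ ≤ k n :=
          Nat.le_succ_of_le (Finset.le_sup (f := fun i => ⌈l (e i)⌉₊)
            (Finset.mem_range.mpr (Nat.lt_succ_of_le hin)))
        exact h1.trans (by exact_mod_cast h2)
      have hFC : F ⊆ C := by
        intro x hx
        simp only [hFdef, hCdef, Set.Finite.mem_toFinset, hB, Set.mem_setOf_eq] at hx ⊢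
        have hk0 : (0:ℝ) ≤ (k n : ℝ) := Nat.cast_nonneg _
        rw [Nat.cast_add]
        linarith
      have hSC : S ⊆ C := by
        intro x hx
        simp only [hSdef, Finset.mem_image] at hx
        obtain ⟨y, hy, rfl⟩ := hx
        simp only [hFdef, Set.Finite.mem_toFinset, hB, Set.mem_setOf_eq] at hy
        simp only [hCdef, Set.Finite.mem_toFinset, hB, Set.mem_setOf_eq]
        have := hsub (e i) y
        rw [Nat.cast_add]
        linarith
      have hScard : S.card = F.card :=
        Finset.card_image_of_injective _ (mul_right_injective (e i))
      -- symmDiff cardinality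
      have hsd : symmDiff S F = (S \ F) ∪ (F \ S) := by
        rw [symmDiff_def, Finset.sup_eq_union]
      have hsdcard : (symmDiff S F).card = (S \ F).card + (F \ S).card := by
        rw [hsd, Finset.card_union_of_disjoint disjoint_sdiff_sdiff]
      have hcomm : (F \ S).card = (S \ F).card := Finset.card_sdiff_comm hScard.symm
      have hsdle : (S \ F).card ≤ C.card - F.card := by
        calc (S \ F).card ≤ (C \ F).card :=
              Finset.card_le_card (Finset.sdiff_subset_sdiff hSC (Finset.Subset.refl _))
          _ = C.card - F.card := Finset.card_sdiff_of_subset hFC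
      have hFle : F.card ≤ C.card := Finset.card_le_card hFC
      -- real arithmetic
      have hFcard : (F.card : ℝ) = f (m n) := by
        simp only [hf]
        rw [Set.ncard_eq_toFinset_card _ (hfin (m n))]
      have hCcard : (C.card : ℝ) = f (m n + k n) := by
        simp only [hf]
        rw [Set.ncard_eq_toFinset_card _ (hfin (m n + k n))]
      have hFpos : (0:ℝ) < F.card := by rw [hFcard]; linarith [hf1 (m n)]
      have hsymR : (((symmDiff S F).card : ℕ) : ℝ) ≤ 2 * ((C.card : ℝ) - F.card) := by
        have heq : (symmDiff S F).card = 2 * (S \ F).card := by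
          rw [hsdcard, hcomm]; ring
        rw [heq]
        have h1 : ((S \ F).card : ℝ) ≤ (C.card : ℝ) - F.card := by
          calc ((S \ F).card : ℝ) ≤ ((C.card - F.card : ℕ) : ℝ) := by exact_mod_cast hsdle
            _ = (C.card : ℝ) - F.card := by rw [Nat.cast_sub hFle]
        push_cast
        linarith
      have hC2 : (C.card : ℝ) ≤ (1 + 1 / ((n : ℝ) + 1)) * F.card := by
        rw [hCcard, hFcard]; exact hm2 n
      rw [div_le_iff₀ hFpos]
      have hn1 : (0:ℝ) < (n : ℝ) + 1 := by positivity
      calc (((symmDiff S F).card : ℕ) : ℝ) ≤ 2 * ((C.card : ℝ) - F.card) := hsymR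
        _ ≤ 2 * ((1 / ((n : ℝ) + 1)) * F.card) := by linarith
        _ = 2 / ((n : ℝ) + 1) * F.card := by ring
    -- squeeze
    have hupper : Tendsto (fun n : ℕ => (2:ℝ) / ((n : ℝ) + 1)) atTop (𝓝 0) := by
      have h0 := (tendsto_const_div_atTop_nhds_zero_nat (2:ℝ)).comp (tendsto_add_atTop_nat 1)
      refine h0.congr fun n => ?_
      simp [Function.comp]
    refine tendsto_of_tendsto_of_tendsto_of_le_of_le' tendsto_const_nhds hupper
      (Eventually.of_forall fun n => by positivity) ?_
    filter_upwards [eventually_ge_atTop i] with n hn using hbound n hn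
end
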